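/- Let G be a weighted d-partite graph with parts T_1,…,T_d such that for every x ∈ T_i and every j ≠ i, the total edge weight from x into T_j equals d_w(x)/(d−1). Let P be the simple random walk matrix on G. For each pair i ≠ j, let P_{i,j} be the random walk on the induced bipartite graph G_{i,j} between T_i and T_j, and suppose λ₂(P_{i,j}) ≤ M(i,j) for a symmetric matrix M ∈ ℝ^{d×d} with nonnegative entries and zero diagonal. Then λ₂(P) ≤ λ_max(M)/(d−1). -/

import Mathlib

lemma amgm_aux (Q c Bi Bj : ℝ) (hc : 0 ≤ c) (hBi : 0 ≤ Bi) (hBj : 0 ≤ Bj)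
    (h : ∀ u v : ℝ, 0 < u → 0 < v → u * v * Q ≤ c * (u ^ 2 * Bi + v ^ 2 * Bj)) :
    Q ≤ 2 * c * (Real.sqrt Bi * Real.sqrt Bj) := by
  have hside : ∀ Q' c' B' : ℝ, 0 ≤ c' → 0 ≤ B' →
      (∀ u : ℝ, 0 < u → u * Q' ≤ c' * B') → Q' ≤ 0 := by
    intro Q' c' B' hc' hB' hh
    by_contra hQ
    push_neg at hQ
    have h1 := hh ((c' * B' + 1) / Q') (by positivity)
    rw [div_mul_cancel₀ _ (ne_of_gt hQ)] at h1
    linarith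
  rcases eq_or_lt_of_le hBi with hBi0 | hBi0
  · have hQ0 : Q ≤ 0 := by
      apply hside Q c Bj hc hBj
      intro u hu
      have := h u 1 hu one_pos
      rw [← hBi0] at this
      nlinarith
    have : 0 ≤ 2 * c * (Real.sqrt Bi * Real.sqrt Bj) := by positivity
    linarith
  rcases eq_or_lt_of_le hBj with hBj0 | hBj0
  · have hQ0 : Q ≤ 0 := by
      apply hside Q c Bi hc hBi
      intro v hv
      have := h 1 v one_pos hv
      rw [← hBj0] at this
      nlinarith
    have : 0 ≤ 2 * c * (Real.sqrt Bi * Real.sqrt Bj) := by positivity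
    linarith
  · set a := Real.sqrt Bi with ha
    set b := Real.sqrt Bj with hb
    have hapos : 0 < a := Real.sqrt_pos.2 hBi0
    have hbpos : 0 < b := Real.sqrt_pos.2 hBj0
    have ha2 : a ^ 2 = Bi := Real.sq_sqrt hBi
    have hb2 : b ^ 2 = Bj := Real.sq_sqrt hBj
    set u := Real.sqrt (b / a) with hu
    set v := Real.sqrt (a / b) with hv
    have hupos : 0 < u := Real.sqrt_pos.2 (by positivity)
    have hvpos : 0 < v := Real.sqrt_pos.2 (by positivity)
    have hu2 : u ^ 2 = b / a := Real.sq_sqrt (by positivity)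
    have hv2 : v ^ 2 = a / b := Real.sq_sqrt (by positivity)
    have huv : u * v = 1 := by
      rw [hu, hv, ← Real.sqrt_mul (by positivity)]
      rw [show b / a * (a / b) = 1 by field_simp]
      exact Real.sqrt_one
    have h1 := h u v hupos hvpos
    rw [huv, one_mul] at h1
    have e1 : u ^ 2 * Bi = a * b := by
      rw [hu2, ← ha2]; field_simp
    have e2 : v ^ 2 * Bj = a * b := by
      rw [hv2, ← hb2]; field_simp
    rw [e1, e2] at h1
    nlinarith

/-- The weight function of the induced bipartite graph between parts `i` and `j`. -/
def wpair {α : Type*} {d : ℕ} (w : α → α → ℝ) (part : α → Fin d) (i j : Fin d) :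
    α → α → ℝ :=
  fun x y => if (part x = i ∧ part y = j) ∨ (part x = j ∧ part y = i) then w x y else 0

/-- If `G` is a weighted `d`-partite graph in which every vertex sends a `1/(d-1)`
fraction of its weighted degree to each other part, the second eigenvalue of the
induced bipartite walk between parts `i` and `j` is at most `M i j` (expressed
variationally: for every test function orthogonal to constants in the bipartite
stationary inner product, the Rayleigh quotient is at most `M i j`), and `L` is an
upper bound for `λ_max(M)` (variationally), then the second eigenvalue of the full
random walk is at most `L/(d-1)` (again expressed via the Rayleigh quotient on the
orthogonal complement of constants in the stationary inner product). -/
theorem stmt6 {α : Type*} [Fintype α] {d : ℕ} (hd : 2 ≤ d)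
    (part : α → Fin d) (w : α → α → ℝ)
    (hsymm : ∀ x y, w x y = w y x) (hnn : ∀ x y, 0 ≤ w x y)
    (hdeg : ∀ x, 0 < ∑ y, w x y)
    (hpartite : ∀ x, ∀ j, j ≠ part x →
      (∑ y ∈ Finset.univ.filter (fun y => part y = j), w x y) = (∑ y, w x y) / ((d : ℝ) - 1))
    (M : Matrix (Fin d) (Fin d) ℝ)
    (hMsymm : ∀ i j, M i j = M j i) (hMnn : ∀ i j, 0 ≤ M i j)
    (hMdiag : ∀ i, M i i = 0)
    (hM : ∀ i j : Fin d, i ≠ j → ∀ f : α → ℝ,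
      (∑ x, (∑ y, wpair w part i j x y) * f x) = 0 →
      (∑ x, ∑ y, wpair w part i j x y * f x * f y) ≤
        M i j * ∑ x, (∑ y, wpair w part i j x y) * f x ^ 2)
    (L : ℝ)
    (hL : ∀ v : Fin d → ℝ, (∑ i, ∑ j, M i j * v i * v j) ≤ L * ∑ i, v i ^ 2) :
    ∀ f : α → ℝ, (∑ x, (∑ y, w x y) * f x) = 0 →
      (∑ x, ∑ y, w x y * f x * f y) ≤ (L / ((d : ℝ) - 1)) * ∑ x, (∑ y, w x y) * f x ^ 2 := by
  intro f hf
  have hd2 : (2:ℝ) ≤ (d:ℝ) := by exact_mod_cast hd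
  have hdpos : (0:ℝ) < (d:ℝ) - 1 := by linarith
  set dw : α → ℝ := fun x => ∑ y, w x y with hdwdef
  have hdwpos : ∀ x, 0 < dw x := hdeg
  -- column sums into a given part
  have hcol : ∀ x j, j ≠ part x → (∑ y, if part y = j then w x y else 0) = dw x / ((d:ℝ) - 1) := by
    intro x j hj
    rw [← Finset.sum_filter]
    exact hpartite x j hj
  -- within-part weights vanish
  have hcol0 : ∀ x, (∑ y, if part y = part x then w x y else 0) = 0 := by
    intro x
    have htot : (∑ j, ∑ y, if part y = j then w x y else 0) = dw x := by
      rw [Finset.sum_comm]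
      refine Finset.sum_congr rfl fun y _ => ?_
      simp [Finset.sum_ite_eq]
    have herase : (∑ j ∈ Finset.univ.erase (part x), ∑ y, if part y = j then w x y else 0)
        = ((d:ℝ) - 1) * (dw x / ((d:ℝ) - 1)) := by
      rw [Finset.sum_congr rfl (fun j hj => hcol x j (Finset.ne_of_mem_erase hj))]
      rw [Finset.sum_const, Finset.card_erase_of_mem (Finset.mem_univ _)]
      simp only [Finset.card_univ, Fintype.card_fin, nsmul_eq_mul]
      have hcast : ((d - 1 : ℕ) : ℝ) = (d:ℝ) - 1 := by
        have : 1 ≤ d := by omega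
        push_cast [this]; ring
      rw [hcast]
    have hsplit := Finset.add_sum_erase Finset.univ
      (fun j => ∑ y, if part y = j then w x y else 0) (Finset.mem_univ (part x))
    rw [herase] at hsplit
    rw [mul_div_cancel₀ _ (ne_of_gt hdpos)] at hsplit
    linarith [htot ▸ hsplit]
  have hsame : ∀ x y, part x = part y → w x y = 0 := by
    intro x y hxy
    have h := (Finset.sum_eq_zero_iff_of_nonneg
      (fun z _ => by by_cases h : part z = part x <;> simp [h, hnn])).1 (hcol0 x) y
      (Finset.mem_univ y)
    simpa [hxy.symm] using h
  -- key pointwise identity: summing wpair over all (i,j) gives 2 w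
  have hI1 : ∀ x y, (∑ i, ∑ j, wpair w part i j x y) = 2 * w x y := by
    intro x y
    by_cases hxy : part x = part y
    · rw [hsame x y hxy]
      rw [Finset.sum_eq_zero]
      · ring
      intro i _
      rw [Finset.sum_eq_zero]
      intro j _
      simp only [wpair]
      split_ifs with h
      · exact hsame x y hxy
      · rfl
    · have hterm : ∀ i j, wpair w part i j x y
          = (if part x = i then (if part y = j then w x y else 0) else 0)
            + (if part x = j then (if part y = i then w x y else 0) else 0) := by
        intro i j
        simp only [wpair]
        by_cases h1 : part x = i ∧ part y = j <;> by_cases h2 : part x = j ∧ part y = i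
        · exact absurd (h2.1.trans h1.2.symm) hxy
        · obtain ⟨e1, e2⟩ := h1; subst e1; subst e2
          simp [hxy, Ne.symm hxy]
        · obtain ⟨e1, e2⟩ := h2; subst e1; subst e2
          simp [hxy, Ne.symm hxy]
        · rw [if_neg (by tauto)]
          rw [not_and_or] at h1 h2
          rcases h1 with h1 | h1 <;> rcases h2 with h2 | h2 <;> simp [h1, h2]
      calc (∑ i, ∑ j, wpair w part i j x y)
          = (∑ i, ∑ j, (if part x = i then (if part y = j then w x y else 0) else 0))
            + (∑ i, ∑ j, (if part x = j then (if part y = i then w x y else 0) else 0)) := by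
            rw [← Finset.sum_add_distrib]
            refine Finset.sum_congr rfl fun i _ => ?_
            rw [← Finset.sum_add_distrib]
            exact Finset.sum_congr rfl fun j _ => hterm i j
        _ = w x y + w x y := by
            congr 1
            · simp [Finset.sum_ite_eq]
            · rw [Finset.sum_comm]
              simp [Finset.sum_ite_eq]
        _ = 2 * w x y := by ring
  -- part-restricted inner products
  set Pint : Fin d → (α → ℝ) → ℝ := fun i φ => ∑ x, if part x = i then dw x * φ x else 0
    with hPintdef
  -- bipartite degrees
  have hDp_i : ∀ i j x, i ≠ j → part x = i →
      (∑ y, wpair w part i j x y) = dw x / ((d:ℝ) - 1) := by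
    intro i j x hij hx
    rw [← hcol x j (by rw [hx]; exact (Ne.symm hij))]
    refine Finset.sum_congr rfl fun y _ => ?_
    simp only [wpair]
    by_cases hy : part y = j
    · rw [if_pos (Or.inl ⟨hx, hy⟩), if_pos hy]
    · rw [if_neg ?_, if_neg hy]
      rintro (⟨-, h⟩ | ⟨h2, -⟩)
      · exact hy h
      · exact hij (hx.symm.trans h2)
  have hDp_0 : ∀ i j x, part x ≠ i → part x ≠ j → (∑ y, wpair w part i j x y) = 0 := by
    intro i j x hxi hxj
    refine Finset.sum_eq_zero fun y _ => ?_
    simp only [wpair]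
    rw [if_neg (by tauto)]
  have hD2 : ∀ i j (φ : α → ℝ), i ≠ j →
      (∑ x, (∑ y, wpair w part i j x y) * φ x)
        = (Pint i φ + Pint j φ) / ((d:ℝ) - 1) := by
    intro i j φ hij
    simp only [hPintdef]
    rw [← Finset.sum_add_distrib, Finset.sum_div]
    refine Finset.sum_congr rfl fun x _ => ?_
    by_cases hxi : part x = i
    · rw [hDp_i i j x hij hxi, if_pos hxi, if_neg (by rw [hxi]; exact hij)]
      ring
    by_cases hxj : part x = j
    · have hswap : (∑ y, wpair w part i j x y) = ∑ y, wpair w part j i x y :=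
        Finset.sum_congr rfl fun y _ => by simp only [wpair]; exact if_congr or_comm rfl rfl
      rw [hswap, hDp_i j i x (Ne.symm hij) hxj, if_pos hxj, if_neg hxi]
      ring
    · rw [hDp_0 i j x hxi hxj, if_neg hxi, if_neg hxj]
      ring
  -- part weights
  set W : Fin d → ℝ := fun i => ∑ x, if part x = i then dw x else 0 with hWdef
  have hWnn : ∀ i, 0 ≤ W i := by
    intro i
    refine Finset.sum_nonneg fun x _ => ?_
    by_cases h : part x = i <;> simp [h, le_of_lt (hdwpos x)]
  have hnotpart : ∀ i x, W i = 0 → part x ≠ i := by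
    intro i x hW hx
    have h1 : dw x ≤ W i := by
      rw [hWdef]
      have := Finset.single_le_sum (f := fun z => if part z = i then dw z else 0)
        (fun z _ => by by_cases h : part z = i <;> simp [h, le_of_lt (hdwpos z)])
        (Finset.mem_univ x)
      simpa [hx] using this
    linarith [hdwpos x]
  have hWeq : ∀ i j, W i = W j := by
    have key : ∀ i j : Fin d, i ≠ j → W i = W j := by
      intro i j hij
      have hE1 : ∀ p q : Fin d, p ≠ q →
          (∑ x, ∑ y, if part x = p ∧ part y = q then w x y else 0)
            = W p / ((d:ℝ) - 1) := by
        intro p q hpq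
        rw [hWdef, Finset.sum_div]
        refine Finset.sum_congr rfl fun x _ => ?_
        by_cases hxp : part x = p
        · rw [if_pos hxp, ← hcol x q (by rw [hxp]; exact Ne.symm hpq)]
          refine Finset.sum_congr rfl fun y _ => ?_
          by_cases hyq : part y = q
          · rw [if_pos ⟨hxp, hyq⟩, if_pos hyq]
          · rw [if_neg (by tauto), if_neg hyq]
        · rw [if_neg hxp, Finset.sum_eq_zero fun y _ => if_neg (by tauto)]
          simp
      have hE2 : (∑ x, ∑ y, if part x = i ∧ part y = j then w x y else 0)
          = (∑ x, ∑ y, if part x = j ∧ part y = i then w x y else 0) := by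
        rw [Finset.sum_comm]
        refine Finset.sum_congr rfl fun a _ => Finset.sum_congr rfl fun b _ => ?_
        rw [hsymm b a]
        exact if_congr and_comm rfl rfl
      have h := (hE1 i j hij).symm.trans (hE2.trans (hE1 j i (Ne.symm hij)))
      field_simp at h
      exact h
    intro i j
    by_cases hij : i = j
    · rw [hij]
    · exact key i j hij
  -- means
  set s : Fin d → ℝ := fun i => Pint i f with hsdef
  set m : Fin d → ℝ := fun i => s i / W i with hmdef
  set g : α → ℝ := fun x => f x - m (part x) with hgdef
  have hfg : ∀ t, f t = g t + m (part t) := by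
    intro t; rw [hgdef]; ring
  have hPint_g : ∀ i, Pint i g = 0 := by
    intro i
    have e : Pint i g = s i - m i * W i := by
      simp only [hPintdef, hsdef, hWdef, hgdef]
      rw [Finset.mul_sum, ← Finset.sum_sub_distrib]
      refine Finset.sum_congr rfl fun x _ => ?_
      by_cases hx : part x = i
      · rw [if_pos hx, if_pos hx, mul_ite, mul_zero, if_pos hx, hx]
        ring
      · rw [if_neg hx, if_neg hx, mul_ite, mul_zero, if_neg hx]
        ring
    by_cases hW : W i = 0
    · have hs : s i = 0 := by
        rw [hsdef, hPintdef]
        exact Finset.sum_eq_zero fun x _ => if_neg (hnotpart i x hW)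
      rw [e, hs, hW]; ring
    · rw [e, hmdef]
      simp only
      rw [div_mul_cancel₀ _ hW]
      ring
  have hssum : (∑ i, s i) = 0 := by
    have e : (∑ i, s i) = ∑ x, dw x * f x := by
      simp only [hsdef, hPintdef]
      rw [Finset.sum_comm]
      refine Finset.sum_congr rfl fun x _ => ?_
      simp [Finset.sum_ite_eq]
    rw [e]
    exact hf
  have hmsum : (∑ i, m i) = 0 := by
    have hd0 : 0 < d := by omega
    set i0 : Fin d := ⟨0, hd0⟩ with hi0
    by_cases hc : W i0 = 0
    · refine Finset.sum_eq_zero fun i _ => ?_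
      rw [hmdef]
      simp only
      rw [hWeq i i0, hc, div_zero]
    · have : ∀ i, m i = s i / W i0 := fun i => by rw [hmdef]; simp only; rw [hWeq i i0]
      rw [Finset.sum_congr rfl fun i _ => this i, ← Finset.sum_div, hssum, zero_div]
  set B : Fin d → ℝ := fun i => Pint i (fun x => g x ^ 2) with hBdef
  have hBnn : ∀ i, 0 ≤ B i := by
    intro i
    rw [hBdef, hPintdef]
    refine Finset.sum_nonneg fun x _ => ?_
    by_cases h : part x = i
    · rw [if_pos h]
      exact mul_nonneg (le_of_lt (hdwpos x)) (sq_nonneg _)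
    · rw [if_neg h]
  -- grouping lemma
  have hgroup : ∀ (φ : α → ℝ) (F : Fin d → ℝ),
      (∑ x, dw x * φ x * F (part x)) = ∑ i, F i * Pint i φ := by
    intro φ F
    rw [hPintdef]
    simp only
    calc (∑ x, dw x * φ x * F (part x))
        = ∑ x, ∑ i, (if part x = i then F i * (dw x * φ x) else 0) := by
          refine Finset.sum_congr rfl fun x _ => ?_
          rw [Finset.sum_ite_eq, if_pos (Finset.mem_univ _)]
          ring
      _ = ∑ i, ∑ x, (if part x = i then F i * (dw x * φ x) else 0) := Finset.sum_comm
      _ = ∑ i, F i * ∑ x, (if part x = i then dw x * φ x else 0) := by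
          refine Finset.sum_congr rfl fun i _ => ?_
          rw [Finset.mul_sum]
          refine Finset.sum_congr rfl fun x _ => ?_
          rw [mul_ite, mul_zero]
  have hgm : (∑ x, dw x * g x * m (part x)) = 0 := by
    rw [hgroup g m]
    exact Finset.sum_eq_zero fun i _ => by rw [hPint_g i, mul_zero]
  -- row sums against the mean function
  have hHsum : ∀ x, (∑ y, w x y * m (part y)) = -(dw x * m (part x) / ((d:ℝ) - 1)) := by
    intro x
    have step1 : (∑ y, w x y * m (part y))
        = ∑ j, m j * (∑ y, if part y = j then w x y else 0) := by
      symm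
      calc ∑ j, m j * (∑ y, if part y = j then w x y else 0)
          = ∑ j, ∑ y, (if part y = j then m j * w x y else 0) := by
            refine Finset.sum_congr rfl fun j _ => ?_
            rw [Finset.mul_sum]
            exact Finset.sum_congr rfl fun y _ => by rw [mul_ite, mul_zero]
        _ = ∑ y, ∑ j, (if part y = j then m j * w x y else 0) := Finset.sum_comm
        _ = ∑ y, w x y * m (part y) := by
            refine Finset.sum_congr rfl fun y _ => ?_
            rw [Finset.sum_ite_eq, if_pos (Finset.mem_univ _)]
            ring
    have step2 : ∀ j : Fin d, m j * (∑ y, if part y = j then w x y else 0)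
        = m j * (dw x / ((d:ℝ) - 1))
          - (if j = part x then m j * (dw x / ((d:ℝ) - 1)) else 0) := by
      intro j
      by_cases hj : j = part x
      · rw [if_pos hj, hj, hcol0 x]
        ring
      · rw [hcol x j hj, if_neg hj]
        ring
    rw [step1, Finset.sum_congr rfl fun j _ => step2 j, Finset.sum_sub_distrib]
    rw [← Finset.sum_mul, hmsum, Finset.sum_ite_eq', if_pos (Finset.mem_univ _)]
    ring
  -- the key pairwise bound
  have hkey : ∀ i j, (∑ x, ∑ y, wpair w part i j x y * g x * g y)
      ≤ 2 * (M i j / ((d:ℝ) - 1)) * (Real.sqrt (B i) * Real.sqrt (B j)) := by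
    intro i j
    by_cases hij : i = j
    · subst hij
      have hz : (∑ x, ∑ y, wpair w part i i x y * g x * g y) = 0 := by
        refine Finset.sum_eq_zero fun x _ => Finset.sum_eq_zero fun y _ => ?_
        simp only [wpair]
        split_ifs with h
        · rcases h with h | h <;> rw [hsame x y (h.1.trans h.2.symm)] <;> ring
        · ring
      rw [hz, hMdiag i]
      simp
    · apply amgm_aux _ _ _ _ (div_nonneg (hMnn i j) (le_of_lt hdpos)) (hBnn i) (hBnn j)
      intro u v hu hv
      set h : α → ℝ := fun x => if part x = i then u * g x else if part x = j then v * g x else 0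
        with hhdef
      have hPi : Pint i h = u * Pint i g := by
        simp only [hPintdef, hhdef]
        rw [Finset.mul_sum]
        refine Finset.sum_congr rfl fun x _ => ?_
        by_cases hx : part x = i
        · rw [if_pos hx, if_pos hx, if_pos hx]
          ring
        · rw [if_neg hx, if_neg hx, mul_zero]
      have hPj : Pint j h = v * Pint j g := by
        simp only [hPintdef, hhdef]
        rw [Finset.mul_sum]
        refine Finset.sum_congr rfl fun x _ => ?_
        by_cases hx : part x = j
        · have hxi : part x ≠ i := by rw [hx]; exact Ne.symm hij
          rw [if_pos hx, if_pos hx, if_neg hxi, if_pos hx]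
          ring
        · rw [if_neg hx, if_neg hx, mul_zero]
      have horth : (∑ x, (∑ y, wpair w part i j x y) * h x) = 0 := by
        rw [hD2 i j h hij, hPi, hPj, hPint_g i, hPint_g j]
        simp
      have happ := hM i j hij h horth
      have hLHS : (∑ x, ∑ y, wpair w part i j x y * h x * h y)
          = u * v * ∑ x, ∑ y, wpair w part i j x y * g x * g y := by
        rw [Finset.mul_sum]
        refine Finset.sum_congr rfl fun x _ => ?_
        rw [Finset.mul_sum]
        refine Finset.sum_congr rfl fun y _ => ?_
        simp only [wpair]
        by_cases hC : (part x = i ∧ part y = j) ∨ (part x = j ∧ part y = i)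
        · rw [if_pos hC]
          rcases hC with ⟨hxi, hyj⟩ | ⟨hxj, hyi⟩
          · have hyi' : part y ≠ i := by rw [hyj]; exact Ne.symm hij
            have hhx : h x = u * g x := by simp only [hhdef]; rw [if_pos hxi]
            have hhy : h y = v * g y := by simp only [hhdef]; rw [if_neg hyi', if_pos hyj]
            rw [hhx, hhy]; ring
          · have hxi' : part x ≠ i := by rw [hxj]; exact Ne.symm hij
            have hhx : h x = v * g x := by simp only [hhdef]; rw [if_neg hxi', if_pos hxj]
            have hhy : h y = u * g y := by simp only [hhdef]; rw [if_pos hyi]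
            rw [hhx, hhy]; ring
        · rw [if_neg hC]; ring
      have hRHS : (∑ x, (∑ y, wpair w part i j x y) * h x ^ 2)
          = (u ^ 2 * B i + v ^ 2 * B j) / ((d:ℝ) - 1) := by
        rw [hD2 i j (fun x => h x ^ 2) hij]
        have e1 : Pint i (fun x => h x ^ 2) = u ^ 2 * B i := by
          simp only [hPintdef, hBdef, hhdef]
          rw [Finset.mul_sum]
          refine Finset.sum_congr rfl fun x _ => ?_
          by_cases hx : part x = i
          · rw [if_pos hx, if_pos hx, if_pos hx]
            ring
          · rw [if_neg hx, if_neg hx, mul_zero]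
        have e2 : Pint j (fun x => h x ^ 2) = v ^ 2 * B j := by
          simp only [hPintdef, hBdef, hhdef]
          rw [Finset.mul_sum]
          refine Finset.sum_congr rfl fun x _ => ?_
          by_cases hx : part x = j
          · have hxi : part x ≠ i := by rw [hx]; exact Ne.symm hij
            rw [if_pos hx, if_neg hxi, if_pos hx, if_pos hx]
            ring
          · rw [if_neg hx, if_neg hx, mul_zero]
        rw [e1, e2]
      rw [hLHS, hRHS] at happ
      calc u * v * (∑ x, ∑ y, wpair w part i j x y * g x * g y)
          ≤ M i j * ((u ^ 2 * B i + v ^ 2 * B j) / ((d:ℝ) - 1)) := happ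
        _ = M i j / ((d:ℝ) - 1) * (u ^ 2 * B i + v ^ 2 * B j) := by ring
  -- summing: ∑ᵢⱼ Q_{ij}(g) = 2 Q(g)
  have hQg2 : (∑ i, ∑ j, ∑ x, ∑ y, wpair w part i j x y * g x * g y)
      = 2 * ∑ x, ∑ y, w x y * g x * g y := by
    have hpt : ∀ x y : α, (∑ i, ∑ j, wpair w part i j x y * g x * g y)
        = 2 * (w x y * g x * g y) := by
      intro x y
      rw [show (2:ℝ) * (w x y * g x * g y)
          = (∑ i, ∑ j, wpair w part i j x y) * g x * g y from by rw [hI1 x y]; ring]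
      simp only [Finset.sum_mul]
    calc (∑ i, ∑ j, ∑ x, ∑ y, wpair w part i j x y * g x * g y)
        = ∑ i, ∑ x, ∑ j, ∑ y, wpair w part i j x y * g x * g y := by
          exact Finset.sum_congr rfl fun i _ => Finset.sum_comm
      _ = ∑ x, ∑ i, ∑ j, ∑ y, wpair w part i j x y * g x * g y := Finset.sum_comm
      _ = ∑ x, ∑ i, ∑ y, ∑ j, wpair w part i j x y * g x * g y := by
          exact Finset.sum_congr rfl fun x _ => Finset.sum_congr rfl fun i _ => Finset.sum_comm
      _ = ∑ x, ∑ y, ∑ i, ∑ j, wpair w part i j x y * g x * g y := by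
          exact Finset.sum_congr rfl fun x _ => Finset.sum_comm
      _ = ∑ x, ∑ y, 2 * (w x y * g x * g y) := by
          exact Finset.sum_congr rfl fun x _ => Finset.sum_congr rfl fun y _ => hpt x y
      _ = 2 * ∑ x, ∑ y, w x y * g x * g y := by
          rw [Finset.mul_sum]
          refine Finset.sum_congr rfl fun x _ => ?_
          rw [Finset.mul_sum]
  have hL0 : 0 ≤ L := by
    have hd0 : 0 < d := by omega
    have h := hL (fun k => if k = (⟨0, hd0⟩ : Fin d) then 1 else 0)
    have e1 : (∑ i, ∑ j, M i j * (if i = (⟨0, hd0⟩ : Fin d) then (1:ℝ) else 0)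
        * (if j = (⟨0, hd0⟩ : Fin d) then (1:ℝ) else 0)) = 0 := by
      rw [Finset.sum_eq_zero]
      intro i _
      rw [Finset.sum_eq_zero]
      intro j _
      by_cases h1 : i = (⟨0, hd0⟩ : Fin d) <;> by_cases h2 : j = (⟨0, hd0⟩ : Fin d)
      · rw [h1, h2, hMdiag]; ring
      · rw [if_neg h2]; ring
      · rw [if_neg h1]; ring
      · rw [if_neg h1]; ring
    have e2 : (∑ i, (if i = (⟨0, hd0⟩ : Fin d) then (1:ℝ) else 0) ^ 2) = 1 := by
      have hterm : ∀ i : Fin d, (if i = (⟨0, hd0⟩ : Fin d) then (1:ℝ) else 0) ^ 2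
          = (if i = (⟨0, hd0⟩ : Fin d) then (1:ℝ) else 0) := by
        intro i; by_cases h1 : i = (⟨0, hd0⟩ : Fin d) <;> simp [h1]
      rw [Finset.sum_congr rfl fun i _ => hterm i]
      simp
    rw [e1, e2, mul_one] at h
    exact h
  have hQgbound : (∑ x, ∑ y, w x y * g x * g y) ≤ (L / ((d:ℝ) - 1)) * ∑ i, B i := by
    have h1 : (∑ i, ∑ j, ∑ x, ∑ y, wpair w part i j x y * g x * g y)
        ≤ ∑ i, ∑ j, 2 * (M i j / ((d:ℝ) - 1)) * (Real.sqrt (B i) * Real.sqrt (B j)) :=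
      Finset.sum_le_sum fun i _ => Finset.sum_le_sum fun j _ => hkey i j
    have h2 : (∑ i, ∑ j, 2 * (M i j / ((d:ℝ) - 1)) * (Real.sqrt (B i) * Real.sqrt (B j)))
        = (2 / ((d:ℝ) - 1)) * ∑ i, ∑ j, M i j * Real.sqrt (B i) * Real.sqrt (B j) := by
      rw [Finset.mul_sum]
      refine Finset.sum_congr rfl fun i _ => ?_
      rw [Finset.mul_sum]
      exact Finset.sum_congr rfl fun j _ => by ring
    have h3 := hL (fun i => Real.sqrt (B i))
    have h4 : (∑ i, Real.sqrt (B i) ^ 2) = ∑ i, B i :=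
      Finset.sum_congr rfl fun i _ => Real.sq_sqrt (hBnn i)
    rw [h4] at h3
    have h5 : (2 / ((d:ℝ) - 1)) * (∑ i, ∑ j, M i j * Real.sqrt (B i) * Real.sqrt (B j))
        ≤ (2 / ((d:ℝ) - 1)) * (L * ∑ i, B i) := by
      apply mul_le_mul_of_nonneg_left h3 (by positivity)
    have h6 := hQg2 ▸ (h1.trans (h2 ▸ h5))
    have h7 : (2 / ((d:ℝ) - 1)) * (L * ∑ i, B i) = 2 * ((L / ((d:ℝ) - 1)) * ∑ i, B i) := by
      ring
    linarith [h7 ▸ h6]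
  -- decomposition of the quadratic form
  have hX : (∑ x, ∑ y, w x y * g x * m (part y)) = 0 := by
    calc (∑ x, ∑ y, w x y * g x * m (part y))
        = ∑ x, -(1/((d:ℝ)-1)) * (dw x * g x * m (part x)) := by
          refine Finset.sum_congr rfl fun x _ => ?_
          rw [show (∑ y, w x y * g x * m (part y)) = g x * ∑ y, w x y * m (part y) from by
            rw [Finset.mul_sum]; exact Finset.sum_congr rfl fun y _ => by ring]
          rw [hHsum x]
          ring
      _ = -(1/((d:ℝ)-1)) * ∑ x, dw x * g x * m (part x) := by rw [← Finset.mul_sum]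
      _ = 0 := by rw [hgm]; ring
  have hX' : (∑ x, ∑ y, w x y * m (part x) * g y) = 0 := by
    calc (∑ x, ∑ y, w x y * m (part x) * g y)
        = ∑ y, ∑ x, w x y * m (part x) * g y := Finset.sum_comm
      _ = ∑ y, -(1/((d:ℝ)-1)) * (dw y * g y * m (part y)) := by
          refine Finset.sum_congr rfl fun y _ => ?_
          rw [show (∑ x, w x y * m (part x) * g y) = g y * ∑ x, w y x * m (part x) from by
            rw [Finset.mul_sum]; exact Finset.sum_congr rfl fun x _ => by rw [hsymm x y]; ring]
          rw [hHsum y]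
          ring
      _ = -(1/((d:ℝ)-1)) * ∑ y, dw y * g y * m (part y) := by rw [← Finset.mul_sum]
      _ = 0 := by rw [hgm]; ring
  have hY : (∑ x, ∑ y, w x y * m (part x) * m (part y)) ≤ 0 := by
    have e : (∑ x, ∑ y, w x y * m (part x) * m (part y))
        = ∑ x, -(dw x * m (part x) ^ 2 / ((d:ℝ) - 1)) := by
      refine Finset.sum_congr rfl fun x _ => ?_
      rw [show (∑ y, w x y * m (part x) * m (part y))
          = m (part x) * ∑ y, w x y * m (part y) from by
        rw [Finset.mul_sum]; exact Finset.sum_congr rfl fun y _ => by ring]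
      rw [hHsum x]
      ring
    rw [e]
    refine Finset.sum_nonpos fun x _ => ?_
    have : 0 ≤ dw x * m (part x) ^ 2 / ((d:ℝ) - 1) :=
      div_nonneg (mul_nonneg (le_of_lt (hdwpos x)) (sq_nonneg _)) (le_of_lt hdpos)
    linarith
  have hQsplit : (∑ x, ∑ y, w x y * f x * f y)
      = (∑ x, ∑ y, w x y * g x * g y) + (∑ x, ∑ y, w x y * g x * m (part y))
        + (∑ x, ∑ y, w x y * m (part x) * g y)
        + (∑ x, ∑ y, w x y * m (part x) * m (part y)) := by
    calc (∑ x, ∑ y, w x y * f x * f y)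
        = ∑ x, ((∑ y, w x y * g x * g y) + (∑ y, w x y * g x * m (part y))
            + (∑ y, w x y * m (part x) * g y) + (∑ y, w x y * m (part x) * m (part y))) := by
          refine Finset.sum_congr rfl fun x _ => ?_
          rw [← Finset.sum_add_distrib, ← Finset.sum_add_distrib, ← Finset.sum_add_distrib]
          refine Finset.sum_congr rfl fun y _ => ?_
          rw [hfg x, hfg y]
          ring
      _ = _ := by
          rw [Finset.sum_add_distrib, Finset.sum_add_distrib, Finset.sum_add_distrib]
  have hNsplit : (∑ x, dw x * f x ^ 2) = (∑ i, B i) + ∑ x, dw x * m (part x) ^ 2 := by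
    have e1 : (∑ x, dw x * f x ^ 2)
        = (∑ x, dw x * g x ^ 2) + 2 * (∑ x, dw x * g x * m (part x))
          + ∑ x, dw x * m (part x) ^ 2 := by
      rw [Finset.mul_sum, ← Finset.sum_add_distrib, ← Finset.sum_add_distrib]
      refine Finset.sum_congr rfl fun x _ => ?_
      rw [hfg x]
      ring
    have e2 : (∑ x, dw x * g x ^ 2) = ∑ i, B i := by
      have h' := hgroup (fun x => g x ^ 2) (fun _ => 1)
      simp only [mul_one, one_mul] at h'
      exact h'
    rw [e1, e2, hgm]
    ring
  have hZnn : 0 ≤ ∑ x, dw x * m (part x) ^ 2 :=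
    Finset.sum_nonneg fun x _ => mul_nonneg (le_of_lt (hdwpos x)) (sq_nonneg _)
  have hfinal : (∑ x, (∑ y, w x y) * f x ^ 2) = ∑ x, dw x * f x ^ 2 := rfl
  rw [hfinal, hNsplit, hQsplit, hX, hX', mul_add]
  have hLd : 0 ≤ L / ((d:ℝ) - 1) := div_nonneg hL0 (le_of_lt hdpos)
  nlinarith [mul_nonneg hLd hZnn]
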